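/- Let φ, ψ : ℂ → ℂ be entire functions with ψ and φ nowhere vanishing. Define d_n : ℂ → ℂ by d₀ = −ψ, d₁ = ψ', d₂ = (ψ''ψ − (ψ')² + φψ³)/ψ, and d_n = d_{n-1}' + (1/ψ)·∑_{k=2}^{n-2} d_k d_{n-k} for n ≥ 3; define f_n by f₀ = −φ, f₁ = φ', f₂ = (φ''φ − (φ')² + ψφ³)/φ, and f_n = f_{n-1}' + (1/φ)·∑_{k=2}^{n-2} f_k f_{n-k} for n ≥ 3. Then, with the convention d₋₁ = f₋₁ = 0, for every n ≥ 0 and all x ∈ ℂ: ψ·d_{n-1}' − 2ψ'·d_{n-1} + ψ·d_n + ∑_{i+j=n, i,j≥0} d_i d_j + ψ³φ·[n = 2] = 0, and φ·f_{n-1}' − 2φ'·f_{n-1} + φ·f_n + ∑_{i+j=n, i,j≥0} f_i f_j + φ³ψ·[n = 2] = 0, where [n=2] equals 1 if n = 2 and 0 otherwise. -/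

import Mathlib

lemma sum_split (g : ℕ → ℂ) (m : ℕ) :
    ∑ k ∈ Finset.range (m + 4), g k
      = g 0 + g 1 + (∑ k ∈ Finset.Icc 2 (m + 1), g k) + g (m + 2) + g (m + 3) := by
  induction m with
  | zero => simp [Finset.sum_range_succ]
  | succ m ih =>
      rw [show m + 1 + 4 = (m + 4) + 1 by ring, Finset.sum_range_succ, ih,
        show m + 1 + 1 = m + 2 from rfl,
        Finset.sum_Icc_succ_top (show 2 ≤ m + 2 by omega)]
      ring

lemma key (φ ψ : ℂ → ℂ) (hψ0 : ∀ x : ℂ, ψ x ≠ 0)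
    (d : ℕ → ℂ → ℂ)
    (hd0 : d 0 = fun x => -ψ x)
    (hd1 : d 1 = deriv ψ)
    (hd2 : d 2 = fun x =>
      (deriv (deriv ψ) x * ψ x - (deriv ψ x) ^ 2 + φ x * (ψ x) ^ 3) / ψ x)
    (hd : ∀ n : ℕ, d (n + 3) = deriv (d (n + 2)) + fun x =>
      (1 / ψ x) * ∑ k ∈ Finset.Icc 2 (n + 1), d k x * d (n + 3 - k) x)
    (dm : ℕ → ℂ → ℂ) (hdm0 : dm 0 = 0) (hdm : ∀ n : ℕ, dm (n + 1) = d n) :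
    ∀ (n : ℕ) (x : ℂ),
      ψ x * deriv (dm n) x - 2 * deriv ψ x * dm n x + ψ x * d n x
          + (∑ k ∈ Finset.range (n + 1), d k x * d (n - k) x)
          + (if n = 2 then (ψ x) ^ 3 * φ x else 0) = 0 := by
  intro n x
  have hx := hψ0 x
  match n with
  | 0 =>
      rw [hdm0]
      have h0 : deriv (0 : ℂ → ℂ) x = 0 := by
        rw [show (0 : ℂ → ℂ) = fun _ => (0 : ℂ) from rfl]
        exact deriv_const x 0
      rw [h0]
      simp [hd0, Finset.sum_range_succ]
  | 1 =>
      rw [show dm 1 = d 0 from hdm 0]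
      have hder : deriv (d 0) x = -deriv ψ x := by rw [hd0]; exact deriv.fun_neg
      have hd0x : d 0 x = -ψ x := by rw [hd0]
      simp only [Finset.sum_range_succ, Finset.sum_range_zero, hd1]
      rw [hder, hd0x]
      norm_num
      ring
  | 2 =>
      rw [show (2:ℕ) = 1 + 1 from rfl, hdm 1, hd1]
      have h2 : d 2 x = (deriv (deriv ψ) x * ψ x - (deriv ψ x) ^ 2 + φ x * (ψ x) ^ 3) / ψ x := by
        rw [hd2]
      simp only [Finset.sum_range_succ, Finset.sum_range_zero, hd0, hd1, if_pos rfl, ↓reduceIte]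
      rw [h2]
      field_simp
      ring
  | (m + 3) =>
      rw [show m + 3 = (m + 2) + 1 from rfl, hdm (m + 2)]
      have hrec : d (m + 3) x = deriv (d (m + 2)) x
          + (1 / ψ x) * ∑ k ∈ Finset.Icc 2 (m + 1), d k x * d (m + 3 - k) x := by
        rw [hd m]; rfl
      rw [sum_split (fun k => d k x * d (m + 3 - k) x) m]
      simp only [Nat.sub_zero, show m + 3 - 1 = m + 2 by omega,
        show m + 3 - (m + 2) = 1 by omega, Nat.sub_self, hd0, hd1,
        if_neg (by omega : ¬ m + 3 = 2)]
      rw [hrec]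
      field_simp
      ring

/-- **Lemma 3.5, coefficientwise form.** For entire, nowhere-vanishing `φ, ψ`, the
sequences `d_n` and `f_n` (with `d₀ = −ψ`, `d₁ = ψ'`, `d₂ = (ψ''ψ − (ψ')² + φψ³)/ψ`,
`d_n = d_{n-1}' + (1/ψ)∑_{k=2}^{n-2} d_k d_{n-k}` and symmetrically for `f`), with the
convention `d₋₁ = f₋₁ = 0` (realized by the shifted sequences `dm, fm`), satisfy for all
`n ≥ 0` the identities expressing that
`F⁽²⁾ = −(t²/ψ²)∑ d_n(−t)^{-n}` solves `t∂ₓF = −ψF² + t²F − t²φ` and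
`G⁽²⁾ = −(t²/φ²)∑ f_n(−t)^{-n}` solves `t∂ₓG = −φG² + t²G − t²ψ`. -/
theorem second_solution_coefficient_identities
    (φ ψ : ℂ → ℂ) (hφ : Differentiable ℂ φ) (hψ : Differentiable ℂ ψ)
    (hφ0 : ∀ x : ℂ, φ x ≠ 0) (hψ0 : ∀ x : ℂ, ψ x ≠ 0)
    (d f : ℕ → ℂ → ℂ)
    (hd0 : d 0 = fun x => -ψ x)
    (hd1 : d 1 = deriv ψ)
    (hd2 : d 2 = fun x =>
      (deriv (deriv ψ) x * ψ x - (deriv ψ x) ^ 2 + φ x * (ψ x) ^ 3) / ψ x)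
    (hd : ∀ n : ℕ, d (n + 3) = deriv (d (n + 2)) + fun x =>
      (1 / ψ x) * ∑ k ∈ Finset.Icc 2 (n + 1), d k x * d (n + 3 - k) x)
    (hf0 : f 0 = fun x => -φ x)
    (hf1 : f 1 = deriv φ)
    (hf2 : f 2 = fun x =>
      (deriv (deriv φ) x * φ x - (deriv φ x) ^ 2 + ψ x * (φ x) ^ 3) / φ x)
    (hf : ∀ n : ℕ, f (n + 3) = deriv (f (n + 2)) + fun x =>
      (1 / φ x) * ∑ k ∈ Finset.Icc 2 (n + 1), f k x * f (n + 3 - k) x)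
    (dm fm : ℕ → ℂ → ℂ)
    (hdm0 : dm 0 = 0) (hdm : ∀ n : ℕ, dm (n + 1) = d n)
    (hfm0 : fm 0 = 0) (hfm : ∀ n : ℕ, fm (n + 1) = f n) :
    ∀ (n : ℕ) (x : ℂ),
      (ψ x * deriv (dm n) x - 2 * deriv ψ x * dm n x + ψ x * d n x
          + (∑ k ∈ Finset.range (n + 1), d k x * d (n - k) x)
          + (if n = 2 then (ψ x) ^ 3 * φ x else 0) = 0)
        ∧
      (φ x * deriv (fm n) x - 2 * deriv φ x * fm n x + φ x * f n x
          + (∑ k ∈ Finset.range (n + 1), f k x * f (n - k) x)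
          + (if n = 2 then (φ x) ^ 3 * ψ x else 0) = 0) := by
  intro n x
  exact ⟨key φ ψ hψ0 d hd0 hd1 hd2 hd dm hdm0 hdm n x,
         key ψ φ hφ0 f hf0 hf1 hf2 hf fm hfm0 hfm n x⟩
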